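/- Let C be the unitary DFT matrix and B the unitary real-imaginary mapping matrix. Then the matrix A = C^H B^H is a real orthogonal matrix, i.e., A has real entries and A^T A = A A^T = I_n. -/

import Mathlib

open Complex Matrix

noncomputable def Bmat (n : ℕ) : Matrix (Fin n) (Fin n) ℂ := fun i j =>
  if i.val = 0 ∧ j.val = 0 then 1
  else if i.val = 1 ∧ j.val = n / 2 then 1
  else if 2 ≤ i.val ∧ i.val ≤ n / 2 ∧ j.val = i.val - 1 then (1 / Real.sqrt 2 : ℝ)
  else if 2 ≤ i.val ∧ i.val ≤ n / 2 ∧ j.val = n - (i.val - 1) then (1 / Real.sqrt 2 : ℝ)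
  else if n / 2 + 1 ≤ i.val ∧ i.val ≤ n - 1 ∧ j.val = i.val - n / 2 then
    -Complex.I / Real.sqrt 2
  else if n / 2 + 1 ≤ i.val ∧ i.val ≤ n - 1 ∧ j.val = n - (i.val - n / 2) then
    Complex.I / Real.sqrt 2
  else 0

noncomputable def dl (n a : ℕ) : Fin n → ℂ := fun k => if (k : ℕ) = a then 1 else 0

lemma conj_dl (n a : ℕ) (k : Fin n) : (starRingEnd ℂ) (dl n a k) = dl n a k := by
  simp [dl, apply_ite]

lemma sum_dl_mul {n : ℕ} (a : ℕ) (ha : a < n) (f : Fin n → ℂ) :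
    ∑ k, dl n a k * f k = f ⟨a, ha⟩ := by
  have h : ∀ k : Fin n, dl n a k * f k = if k = ⟨a, ha⟩ then f k else 0 := by
    intro k
    simp only [dl, Fin.ext_iff, ite_mul, one_mul, zero_mul]
  rw [Finset.sum_congr rfl (fun k _ => h k), Finset.sum_ite_eq' Finset.univ ⟨a, ha⟩ f]
  simp

lemma sum_dl_dl {n : ℕ} (a c : ℕ) (ha : a < n) :
    ∑ k : Fin n, dl n a k * dl n c k = if a = c then 1 else 0 := by
  rw [sum_dl_mul a ha]
  simp [dl]

def rA (n i : ℕ) : ℕ := if i = 0 then 0 else if i = 1 then n / 2 else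
  if i ≤ n / 2 then i - 1 else i - n / 2

def rB (n i : ℕ) : ℕ := if i = 0 then 0 else if i = 1 then n / 2 else
  if i ≤ n / 2 then n - (i - 1) else n - (i - n / 2)

noncomputable def cU (n i : ℕ) : ℂ := if i ≤ 1 then 1 else
  if i ≤ n / 2 then ((1 / Real.sqrt 2 : ℝ) : ℂ) else -Complex.I / Real.sqrt 2

noncomputable def cV (n i : ℕ) : ℂ := if i ≤ 1 then 0 else
  if i ≤ n / 2 then ((1 / Real.sqrt 2 : ℝ) : ℂ) else Complex.I / Real.sqrt 2

lemma rA_lt {n : ℕ} (hn : 0 < n) {i : ℕ} (h : i < n) : rA n i < n := by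
  unfold rA; split_ifs <;> omega

lemma rB_lt {n : ℕ} (hn : 0 < n) {i : ℕ} (h : i < n) : rB n i < n := by
  unfold rB; split_ifs <;> omega

lemma B_decomp (n : ℕ) (hn : 0 < n) (hev : Even n) (i k : Fin n) :
    Bmat n i k = cU n i.val * dl n (rA n i.val) k + cV n i.val * dl n (rB n i.val) k := by
  obtain ⟨r, hr⟩ := hev
  have hi := i.isLt
  have hk := k.isLt
  rcases Nat.lt_or_ge i.val 2 with h2 | h2
  · rcases Nat.lt_or_ge i.val 1 with h1 | h1
    · have h0 : i.val = 0 := by omega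
      simp [Bmat, cU, cV, rA, rB, dl, h0]
    · have h0 : i.val = 1 := by omega
      have hh : ¬ n / 2 = 0 := by omega
      simp [Bmat, cU, cV, rA, rB, dl, h0, hh]
  · rcases Nat.lt_or_ge (n / 2) i.val with hM | hM
    · -- upper rows
      have hc0 : ¬ i.val = 0 := by omega
      have hc1 : ¬ i.val = 1 := by omega
      have hc2 : ¬ i.val ≤ n / 2 := by omega
      have hc3 : ¬ i.val ≤ 1 := by omega
      have hle : i.val ≤ n - 1 := by omega
      have hUp : n / 2 + 1 ≤ i.val := by omega
      have hab : i.val - n / 2 ≠ n - (i.val - n / 2) := by omega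
      simp only [Bmat, cU, cV, rA, rB, dl, hc0, hc1, hc2, hc3, hUp, hle, false_and,
        if_false, if_neg, true_and, and_true]
      by_cases ha : (k : ℕ) = i.val - n / 2
      · simp [ha, hab]
      · by_cases hb : (k : ℕ) = n - (i.val - n / 2) <;> simp [ha, hb, hab, Ne.symm hab]
    · -- middle rows
      have hc0 : ¬ i.val = 0 := by omega
      have hc1 : ¬ i.val = 1 := by omega
      have hc3 : ¬ i.val ≤ 1 := by omega
      have hUp : ¬ n / 2 + 1 ≤ i.val := by omega
      have hab : i.val - 1 ≠ n - (i.val - 1) := by omega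
      simp only [Bmat, cU, cV, rA, rB, dl, hc0, hc1, hc3, h2, hM, hUp, false_and,
        if_false, if_neg, true_and, and_true, if_true]
      by_cases ha : (k : ℕ) = i.val - 1
      · simp [ha, hab]
      · by_cases hb : (k : ℕ) = n - (i.val - 1) <;> simp [ha, hb, hab, Ne.symm hab]

lemma BBH_entry (n : ℕ) (hn : 0 < n) (hev : Even n) (i j : Fin n) :
    (Bmat n * (Bmat n)ᴴ) i j =
      cU n i * (starRingEnd ℂ) (cU n j) * (if rA n i = rA n j then 1 else 0)
      + cU n i * (starRingEnd ℂ) (cV n j) * (if rA n i = rB n j then 1 else 0)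
      + cV n i * (starRingEnd ℂ) (cU n j) * (if rB n i = rA n j then 1 else 0)
      + cV n i * (starRingEnd ℂ) (cV n j) * (if rB n i = rB n j then 1 else 0) := by
  rw [Matrix.mul_apply]
  simp only [conjTranspose_apply, RCLike.star_def, B_decomp n hn hev]
  have key : ∀ k : Fin n,
      (cU n i * dl n (rA n i) k + cV n i * dl n (rB n i) k) *
        (starRingEnd ℂ) (cU n j * dl n (rA n j) k + cV n j * dl n (rB n j) k)
      = cU n i * (starRingEnd ℂ) (cU n j) * (dl n (rA n i) k * dl n (rA n j) k)
      + cU n i * (starRingEnd ℂ) (cV n j) * (dl n (rA n i) k * dl n (rB n j) k)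
      + cV n i * (starRingEnd ℂ) (cU n j) * (dl n (rB n i) k * dl n (rA n j) k)
      + cV n i * (starRingEnd ℂ) (cV n j) * (dl n (rB n i) k * dl n (rB n j) k) := by
    intro k
    rw [map_add, _root_.map_mul, _root_.map_mul, conj_dl, conj_dl]
    ring
  rw [Finset.sum_congr rfl fun k _ => key k]
  rw [Finset.sum_add_distrib, Finset.sum_add_distrib, Finset.sum_add_distrib]
  simp only [← Finset.mul_sum]
  rw [sum_dl_dl _ _ (rA_lt hn i.isLt), sum_dl_dl _ _ (rA_lt hn i.isLt),
    sum_dl_dl _ _ (rB_lt hn i.isLt), sum_dl_dl _ _ (rB_lt hn i.isLt)]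

set_option maxHeartbeats 2000000 in
lemma BBH (n : ℕ) (hn : 0 < n) (hev : Even n) : Bmat n * (Bmat n)ᴴ = 1 := by
  obtain ⟨r, hr⟩ := hev
  have h2 : ((Real.sqrt 2 : ℝ) : ℂ) ≠ 0 := by
    simp only [ne_eq, Complex.ofReal_eq_zero]; positivity
  have hsq2 : ((Real.sqrt 2 : ℝ) : ℂ) ^ 2 = 2 := by
    rw [← Complex.ofReal_pow, Real.sq_sqrt (by norm_num)]; norm_num
  ext i j
  rw [BBH_entry n hn ⟨r, hr⟩ i j, Matrix.one_apply]
  have hi := i.isLt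
  have hj := j.isLt
  simp only [Fin.ext_iff]
  simp only [cU, cV, rA, rB]
  split_ifs <;>
  first
  | (exfalso; omega)
  | (simp only [Complex.conj_ofReal, map_div₀, map_neg, _root_.map_one, _root_.map_zero,
      Complex.conj_I, mul_zero, mul_one, zero_mul, one_mul, add_zero, zero_add]
     try ring_nf
     try simp [Complex.I_sq, Complex.ofReal_inv, inv_pow, hsq2]
     try norm_num
     try ring_nf
     try simp [Complex.I_sq, Complex.ofReal_inv, inv_pow, hsq2])

noncomputable def Cmat (n : ℕ) : Matrix (Fin n) (Fin n) ℂ := fun j k =>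
  (Complex.exp (-(2 * Real.pi * Complex.I) / n)) ^ (j.val * k.val) / Real.sqrt n

noncomputable def zeta (n : ℕ) : ℂ := Complex.exp (-(2 * Real.pi * Complex.I) / n)

lemma Cmat_eq (n : ℕ) (j k : Fin n) :
    Cmat n j k = (zeta n) ^ (j.val * k.val) / (Real.sqrt n : ℝ) := rfl

lemma zeta_prim {n : ℕ} (hn : 0 < n) : IsPrimitiveRoot (zeta n) n := by
  have h := Complex.isPrimitiveRoot_exp n hn.ne'
  have e : zeta n = (Complex.exp (2 * Real.pi * Complex.I / n))⁻¹ := by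
    rw [← Complex.exp_neg]; unfold zeta; ring_nf
  rw [e]; exact h.inv

lemma conj_zeta {n : ℕ} : (starRingEnd ℂ) (zeta n) = (zeta n)⁻¹ := by
  unfold zeta
  rw [← Complex.exp_conj, ← Complex.exp_neg]
  congr 1
  simp [map_div₀, Complex.conj_I, Complex.conj_ofReal, map_ofNat, Complex.conj_natCast]
  ring

lemma CCH (n : ℕ) (hn : 0 < n) : Cmat n * (Cmat n)ᴴ = 1 := by
  have hprim := zeta_prim hn
  have hne : zeta n ≠ 0 := Complex.exp_ne_zero _
  have hzn : (zeta n) ^ n = 1 := hprim.pow_eq_one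
  have hsqn : ((Real.sqrt n : ℝ) : ℂ) * ((Real.sqrt n : ℝ) : ℂ) = (n : ℂ) := by
    rw [← Complex.ofReal_mul, Real.mul_self_sqrt (Nat.cast_nonneg n)]
    norm_cast
  have hnC : (n : ℂ) ≠ 0 := Nat.cast_ne_zero.mpr hn.ne'
  ext j l
  rw [Matrix.mul_apply, Matrix.one_apply]
  simp only [conjTranspose_apply, RCLike.star_def, Cmat_eq]
  have key : ∀ k : Fin n,
      (zeta n) ^ (j.val * k.val) / (Real.sqrt n : ℝ) *
        (starRingEnd ℂ) ((zeta n) ^ (l.val * k.val) / (Real.sqrt n : ℝ))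
      = ((zeta n) ^ j.val * ((zeta n) ^ l.val)⁻¹) ^ k.val / n := by
    intro k
    rw [map_div₀, map_pow, conj_zeta, Complex.conj_ofReal, div_mul_div_comm, hsqn]
    congr 1
    rw [mul_pow, inv_pow, inv_pow, ← pow_mul, ← pow_mul]
  rw [Finset.sum_congr rfl fun k _ => key k]
  rw [← Finset.sum_div]
  set x := (zeta n) ^ j.val * ((zeta n) ^ l.val)⁻¹ with hx
  have hxn : x ^ n = 1 := by
    rw [hx, mul_pow, inv_pow, ← pow_mul, ← pow_mul, mul_comm j.val n, mul_comm l.val n,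
      pow_mul, pow_mul, hzn, one_pow, one_pow]
    simp
  by_cases hjl : j = l
  · subst hjl
    have hx1 : x = 1 := by rw [hx, mul_inv_cancel₀ (pow_ne_zero _ hne)]
    rw [hx1]
    simp only [one_pow, Finset.sum_const, Finset.card_univ, Fintype.card_fin, nsmul_eq_mul,
      mul_one, if_pos rfl]
    exact div_self hnC
  · rw [if_neg hjl]
    have hx1 : x ≠ 1 := by
      intro h
      apply hjl
      rw [hx] at h
      exact Fin.ext (hprim.pow_inj j.isLt l.isLt
        ((mul_inv_eq_one₀ (pow_ne_zero _ hne)).mp h))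
    rw [Fin.sum_univ_eq_sum_range (fun k => x ^ k) n, geom_sum_eq hx1, hxn]
    simp

lemma conj_pow_rel {n : ℕ} (hn : 0 < n) (m i : ℕ) (hm : m ≤ n) :
    (zeta n) ^ ((n - m) * i) = (starRingEnd ℂ) ((zeta n) ^ (m * i)) := by
  rw [map_pow, conj_zeta, inv_pow]
  apply eq_inv_of_mul_eq_one_left
  rw [← pow_add, ← add_mul, Nat.sub_add_cancel hm, pow_mul, (zeta_prim hn).pow_eq_one, one_pow]

lemma im1 (r : ℝ) (w : ℂ) : ((r : ℂ) * w + (r : ℂ) * (starRingEnd ℂ) w).im = 0 := by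
  simp [Complex.add_im, Complex.mul_im, Complex.conj_re, Complex.conj_im]
  try ring

lemma im2 (r : ℝ) (w : ℂ) :
    (-Complex.I / (r : ℂ) * w + Complex.I / (r : ℂ) * (starRingEnd ℂ) w).im = 0 := by
  simp [div_eq_mul_inv, Complex.add_im, Complex.mul_im, Complex.mul_re,
    Complex.conj_re, Complex.conj_im, Complex.I_re, Complex.I_im]

lemma div_real_im (w : ℂ) (s : ℝ) : (w / (s : ℂ)).im = w.im / s := by
  rw [div_eq_mul_inv, ← Complex.ofReal_inv]
  simp [Complex.mul_im]
  ring

lemma BC_real (n : ℕ) (hn : 0 < n) (hev : Even n) (j i : Fin n) :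
    ((Bmat n * Cmat n) j i).im = 0 := by
  obtain ⟨r, hr⟩ := hev
  rw [Matrix.mul_apply]
  simp only [B_decomp n hn ⟨r, hr⟩]
  have key : ∀ k : Fin n,
      (cU n j.val * dl n (rA n j.val) k + cV n j.val * dl n (rB n j.val) k) * Cmat n k i
      = cU n j.val * (dl n (rA n j.val) k * Cmat n k i)
        + cV n j.val * (dl n (rB n j.val) k * Cmat n k i) := by
    intro k; ring
  rw [Finset.sum_congr rfl fun k _ => key k, Finset.sum_add_distrib,
    ← Finset.mul_sum, ← Finset.mul_sum,
    sum_dl_mul _ (rA_lt hn j.isLt), sum_dl_mul _ (rB_lt hn j.isLt)]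
  simp only [Cmat_eq]
  rw [← mul_div_assoc, ← mul_div_assoc, ← add_div, div_real_im]
  have hj := j.isLt
  rcases Nat.lt_or_ge j.val 2 with h2 | h2
  · rcases Nat.lt_or_ge j.val 1 with h1 | h1
    · have h0 : j.val = 0 := by omega
      simp [cU, cV, rA, rB, h0]
    · have h0 : j.val = 1 := by omega
      have hm : n / 2 ≤ n := by omega
      have hw : (zeta n) ^ (n / 2 * i.val)
          = (starRingEnd ℂ) ((zeta n) ^ (n / 2 * i.val)) := by
        conv_lhs => rw [show n / 2 = n - n / 2 by omega]
        exact conj_pow_rel hn (n / 2) i.val hm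
      have him : ((zeta n) ^ (n / 2 * i.val)).im = 0 :=
        Complex.conj_eq_iff_im.mp hw.symm
      simp [cU, cV, rA, rB, h0, him]
  · rcases Nat.lt_or_ge (n / 2) j.val with hM | hM
    · -- upper rows
      have hc3 : ¬ j.val ≤ 1 := by omega
      have hc2 : ¬ j.val ≤ n / 2 := by omega
      have hm : j.val - n / 2 ≤ n := by omega
      simp only [cU, cV, rA, rB, if_neg hc3, if_neg hc2, if_neg (by omega : ¬ j.val = 0),
        if_neg (by omega : ¬ j.val = 1)]
      rw [conj_pow_rel hn (j.val - n / 2) i.val hm, im2]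
      simp
    · -- middle rows
      have hc3 : ¬ j.val ≤ 1 := by omega
      have hm : j.val - 1 ≤ n := by omega
      simp only [cU, cV, rA, rB, if_neg hc3, if_pos hM, if_neg (by omega : ¬ j.val = 0),
        if_neg (by omega : ¬ j.val = 1)]
      rw [conj_pow_rel hn (j.val - 1) i.val hm, im1]
      simp

theorem Amat_real_orthogonal (n : ℕ) (hn : 0 < n) (hev : Even n)
    (A : Matrix (Fin n) (Fin n) ℂ) (hA : A = (Cmat n)ᴴ * (Bmat n)ᴴ) :
    (∀ i j, (A i j).im = 0) ∧ Aᵀ * A = 1 ∧ A * Aᵀ = 1 := by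
  have hB := BBH n hn hev
  have hC := CCH n hn
  have hBc : (Bmat n)ᴴ * Bmat n = 1 := mul_eq_one_comm.mp hB
  have hCc : (Cmat n)ᴴ * Cmat n = 1 := mul_eq_one_comm.mp hC
  have hre : ∀ i j, (A i j).im = 0 := by
    intro i j
    have : A i j = (starRingEnd ℂ) ((Bmat n * Cmat n) j i) := by
      rw [hA, ← Matrix.conjTranspose_mul]
      simp [Matrix.conjTranspose_apply, RCLike.star_def]
    rw [this, Complex.conj_im, BC_real n hn hev j i, neg_zero]
  have hT : Aᵀ = Aᴴ := by
    ext i j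
    rw [Matrix.transpose_apply, Matrix.conjTranspose_apply, RCLike.star_def,
      Complex.conj_eq_iff_im.mpr (hre j i)]
  refine ⟨hre, ?_, ?_⟩
  · rw [hT, hA, Matrix.conjTranspose_mul, Matrix.conjTranspose_conjTranspose,
      Matrix.conjTranspose_conjTranspose, Matrix.mul_assoc,
      ← Matrix.mul_assoc (Cmat n), hC, Matrix.one_mul, hB]
  · rw [hT, hA, Matrix.conjTranspose_mul, Matrix.conjTranspose_conjTranspose,
      Matrix.conjTranspose_conjTranspose, Matrix.mul_assoc,
      ← Matrix.mul_assoc ((Bmat n)ᴴ), hBc, Matrix.one_mul, hCc]
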